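/- Let V be a vector space over a field F and let {a,b} = [a,b] + λ(a) + μ(b) + s be a bi-affine bracket on V satisfying the derivative identity {{a,b},c} = {{a,c},b} − {a,b} + {a,{b,c}} for all a, b, c ∈ V. Define v(a,b) := {a,b} − a. Then v satisfies the vector-valued Leibniz rule: for all a, b, c ∈ V, v(v(a,b), c) − v(0,c) = (v(v(a,c), b) − v(0,b)) + (v(a, v(b,c)) − v(a,0)). -/
import Mathlib


/-- If the bi-affine bracket `{a,b} = B a b + lam a + mu b + s` on a vector space `V`
satisfies the derivative identity `{{a,b},c} = {{a,c},b} − {a,b} + {a,{b,c}}`, then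
`v(a,b) := {a,b} − a` satisfies the vector-valued Leibniz rule. -/
theorem derivative_bracket_gives_vector_valued_leibniz
    {F V : Type*} [Field F] [AddCommGroup V] [Module F V]
    (B : V →ₗ[F] V →ₗ[F] V) (lam mu : V →ₗ[F] V) (s : V)
    (br : V → V → V) (hbr : ∀ a b, br a b = B a b + lam a + mu b + s)
    (der : ∀ a b c : V, br (br a b) c = br (br a c) b - br a b + br a (br b c))
    (v : V → V → V) (hv : ∀ a b, v a b = br a b - a) :
    ∀ a b c : V,
      v (v a b) c - v 0 c = (v (v a c) b - v 0 b) + (v a (v b c) - v a 0) := by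
  have key1 : ∀ x y c : V, br (x - y) c = br x c - br y c + br 0 c := by
    intro x y c
    simp only [hbr, map_sub, map_zero, LinearMap.sub_apply, LinearMap.zero_apply]
    abel
  have key2 : ∀ a x y : V, br a (x - y) = br a x - br a y + br a 0 := by
    intro a x y
    simp only [hbr, map_sub, map_zero]
    abel
  intro a b c
  rw [hv (v a b) c, hv 0 c, hv (v a c) b, hv 0 b, hv a (v b c), hv a 0,
      hv a b, hv a c, hv b c, key1, key1, key2, der a b c]
  abel
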